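/- Let φ : A → B be a surjective homomorphism of (unital, possibly noncommutative) artinian rings. Then the induced group homomorphism on groups of units φ× : A× → B× is surjective. -/

import Mathlib

open Submodule Function

section HL

variable {A : Type*} [Ring A]

private def jrad (A : Type*) [Ring A] : Ideal A := Ideal.jacobson (⊥ : Ideal A)

/-- Iterated smul-powers of the Jacobson radical. -/
private def jpow (A : Type*) [Ring A] : ℕ → Ideal A
  | 0 => ⊤
  | n + 1 => jrad A • jpow A n

private lemma jrad_mul_mem {x : A} (hx : x ∈ jrad A) (y : A) :
    x * y ∈ jrad A := by
  exact Ideal.IsTwoSided.mul_mem_of_left (I := Ideal.jacobson (⊥ : Ideal A)) y hx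

private lemma jpow_mul_mem : ∀ (n : ℕ) {x : A}, x ∈ jpow A n → ∀ y, x * y ∈ jpow A n
  | 0, x, _, y => mem_top
  | n + 1, x, hx, y => by
    refine Submodule.smul_induction_on hx (fun r hr m hm => ?_) (fun x₁ x₂ h₁ h₂ => ?_)
    · have h : (r • m) * y = r • (m * y) := by
        simp only [smul_eq_mul, mul_assoc]
      rw [h]
      exact Submodule.smul_mem_smul hr (jpow_mul_mem n hm y)
    · have h : (x₁ + x₂) * y = x₁ * y + x₂ * y := add_mul _ _ _
      rw [h]
      exact add_mem h₁ h₂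

private lemma jpow_succ_le (n : ℕ) : jpow A (n + 1) ≤ jpow A n :=
  Submodule.smul_le_right

private lemma jpow_antitone : ∀ {m n : ℕ}, m ≤ n → jpow A n ≤ jpow A m := by
  intro m n h
  induction n with
  | zero =>
    have : m = 0 := by omega
    simp [this]
  | succ k ih =>
    rcases Nat.lt_or_ge m (k+1) with h' | h'
    · exact le_trans (jpow_succ_le k) (ih (by omega))
    · have : m = k + 1 := le_antisymm h h'
      simp [this]

private lemma jpow_smul (m k : ℕ) : jpow A m • jpow A k = jpow A (m + k) := by
  induction m with
  | zero =>
    have h0 : jpow A 0 = (⊤ : Ideal A) := rfl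
    rw [h0, Submodule.top_smul, Nat.zero_add]
  | succ j ih =>
    have h : jpow A (j + 1) = jrad A • jpow A j := rfl
    rw [h, Submodule.smul_assoc, ih]
    have : j + 1 + k = (j + k) + 1 := by omega
    rw [this]
    rfl

private lemma jpow_le_jrad {n : ℕ} (hn : 1 ≤ n) : jpow A n ≤ jrad A := by
  refine le_trans (jpow_antitone hn) ?_
  show jrad A • jpow A 0 ≤ jrad A
  rw [Submodule.smul_le]
  intro r hr x _
  exact jrad_mul_mem hr x

/-- In an artinian ring, the Jacobson radical is nilpotent (in the `jpow` sense). -/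
private lemma jpow_eq_bot (A : Type*) [Ring A] [IsArtinianRing A] :
    ∃ n, jpow A n = ⊥ := by
  obtain ⟨n, hn⟩ := IsArtinian.monotone_stabilizes
    (⟨fun k => OrderDual.toDual (jpow A k), fun i j h => jpow_antitone h⟩ :
      ℕ →o (Submodule A A)ᵒᵈ)
  set T : Ideal A := jpow A (n + 1) with hT
  have hstab : ∀ m, n + 1 ≤ m → T = jpow A m := by
    intro m hm
    have h1 : jpow A n = jpow A (n+1) := hn (n+1) (by omega)
    have h2 : jpow A n = jpow A m := hn m (by omega)
    rw [hT, ← h1, h2]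
  have hTT : T • T = T := by
    rw [hT, jpow_smul]
    exact (hstab (n + 1 + (n + 1)) (by omega)).symm
  refine ⟨n + 1, ?_⟩
  by_contra hbot
  have hS : ({L : Submodule A A | T • L ≠ ⊥} : Set (Submodule A A)).Nonempty := by
    refine ⟨⊤, fun h => hbot ?_⟩
    have hle : T ≤ T • (⊤ : Ideal A) := by
      intro x hx
      simpa using Submodule.smul_mem_smul hx (mem_top (x := (1:A)))
    rw [h] at hle
    exact le_bot_iff.mp hle
  obtain ⟨L, hL, hmin⟩ := IsArtinian.set_has_minimal {L : Submodule A A | T • L ≠ ⊥} hS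
  have hx : ∃ x ∈ L, T • (span A {x}) ≠ ⊥ := by
    by_contra hc
    push_neg at hc
    apply hL
    rw [eq_bot_iff, Submodule.smul_le]
    intro r hr m hm
    have hmem : r • m ∈ T • (span A {m}) :=
      Submodule.smul_mem_smul hr (Submodule.mem_span_singleton_self m)
    rw [hc m hm] at hmem
    exact hmem
  obtain ⟨x, hxL, hspan⟩ := hx
  have hspan_le : span A {x} ≤ L := by
    rw [Submodule.span_le]
    simpa using hxL
  have hspan_eq : span A {x} = L := by
    by_contra hne
    exact hmin (span A {x}) hspan (lt_of_le_of_ne hspan_le hne)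
  have hTL_mem : T • L ∈ {L : Submodule A A | T • L ≠ ⊥} := by
    show T • (T • L) ≠ ⊥
    rw [← Submodule.smul_assoc, hTT]
    exact hL
  have hTL_eq : T • L = L := by
    by_contra hne
    exact hmin (T • L) hTL_mem (lt_of_le_of_ne Submodule.smul_le_right hne)
  have hx_mem : x ∈ T • span A {x} := by
    rw [hspan_eq, hTL_eq]
    exact hxL
  have hsx : ∃ s ∈ T, s * x = x := by
    have key : ∀ y, y ∈ T • span A {x} → ∃ s ∈ T, s * x = y := by
      intro y hy
      refine Submodule.smul_induction_on hy (fun r hr m hm => ?_) ?_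
      · obtain ⟨r', rfl⟩ := Submodule.mem_span_singleton.mp hm
        refine ⟨r * r', jpow_mul_mem _ hr r', ?_⟩
        simp [smul_eq_mul, mul_assoc]
      · rintro y₁ y₂ ⟨s₁, hs₁, rfl⟩ ⟨s₂, hs₂, rfl⟩
        exact ⟨s₁ + s₂, add_mem hs₁ hs₂, by rw [add_mul]⟩
    exact key x hx_mem
  obtain ⟨s, hsT, hs⟩ := hsx
  have hs_jrad : s ∈ jrad A := jpow_le_jrad (by omega) hsT
  have hunit : ∃ z : A, z * (1 - s) = 1 := by
    obtain ⟨z, hz⟩ := Ideal.mem_jacobson_iff.mp hs_jrad (-1)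
    refine ⟨z, ?_⟩
    rw [Ideal.mem_bot, sub_eq_zero] at hz
    calc z * (1 - s) = z * -1 * s + z := by noncomm_ring
    _ = 1 := hz
  have hx0 : x = 0 := by
    have h1 : (1 - s) * x = 0 := by
      rw [sub_mul, one_mul, hs, sub_self]
    obtain ⟨z, hz⟩ := hunit
    calc x = (z * (1 - s)) * x := by rw [hz, one_mul]
    _ = z * ((1 - s) * x) := by rw [mul_assoc]
    _ = 0 := by rw [h1, mul_zero]
  rw [hx0] at hspan
  apply hspan
  rw [Submodule.span_zero_singleton, Submodule.smul_bot]

/-- A subsingleton module is semisimple. -/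
private lemma semisimple_of_subsingleton {R M : Type*} [Ring R] [AddCommGroup M] [Module R M]
    [Subsingleton M] : IsSemisimpleModule R M := by
  refine IsSemisimpleModule.mk (toComplementedLattice := ?_)
  constructor
  intro a
  refine ⟨⊥, disjoint_bot_right, ?_⟩
  rw [codisjoint_iff, sup_bot_eq]
  apply Submodule.eq_top_iff'.mpr
  intro x
  have : x = 0 := Subsingleton.elim _ _
  simp [this]

/-- Transfer semisimplicity along a surjective linear map. -/
private lemma semisimple_of_surjective {R M N : Type*} [Ring R] [AddCommGroup M] [Module R M]
    [AddCommGroup N] [Module R N] [IsSemisimpleModule R M] (f : M →ₗ[R] N)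
    (hf : Function.Surjective f) : IsSemisimpleModule R N := by
  have h1 : IsSemisimpleModule R (LinearMap.range f) := IsSemisimpleModule.range f
  have h2 : LinearMap.range f = ⊤ := LinearMap.range_eq_top.mpr hf
  rw [h2] at h1
  exact h1.congr Submodule.topEquiv.symm

/-- Transfer semisimplicity along an injective linear map. -/
private lemma semisimple_of_injective {R M N : Type*} [Ring R] [AddCommGroup M] [Module R M]
    [AddCommGroup N] [Module R N] [IsSemisimpleModule R N] (f : M →ₗ[R] N)
    (hf : Function.Injective f) : IsSemisimpleModule R M := by
  have h1 : IsSemisimpleModule R (LinearMap.range f) := inferInstance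
  exact IsSemisimpleModule.congr (LinearEquiv.ofInjective f hf)

/-- Products of two semisimple modules are semisimple. -/
private lemma semisimple_prod {R M N : Type*} [Ring R] [AddCommGroup M] [Module R M]
    [AddCommGroup N] [Module R N] [IsSemisimpleModule R M] [IsSemisimpleModule R N] :
    IsSemisimpleModule R (M × N) := by
  refine isSemisimpleModule_of_isSemisimpleModule_submodule'
    (p := fun b : Bool => if b then LinearMap.range (LinearMap.inl R M N)
      else LinearMap.range (LinearMap.inr R M N)) (fun b => ?_) ?_
  · cases b
    · show IsSemisimpleModule R (LinearMap.range (LinearMap.inr R M N))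
      exact IsSemisimpleModule.congr (LinearEquiv.ofInjective _ LinearMap.inr_injective).symm
    · show IsSemisimpleModule R (LinearMap.range (LinearMap.inl R M N))
      exact IsSemisimpleModule.congr (LinearEquiv.ofInjective _ LinearMap.inl_injective).symm
  · rw [iSup_bool_eq]
    simp only [if_true, Bool.false_eq_true, if_false]
    exact LinearMap.sup_range_inl_inr

/-- The quotient of the ring by a finite inf of maximal left ideals is semisimple. -/
private lemma semisimple_quot_finset_inf :
    ∀ (s : Finset (Ideal A)), (∀ m ∈ s, m.IsMaximal) →
      IsSemisimpleModule A (A ⧸ (s.inf id : Ideal A)) := by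
  classical
  intro s
  induction s using Finset.induction_on with
  | empty =>
    intro _
    show IsSemisimpleModule A (A ⧸ (⊤ : Ideal A))
    have hall : ∀ q : A ⧸ (⊤ : Ideal A), q = 0 := by
      intro q
      obtain ⟨x, rfl⟩ := Submodule.mkQ_surjective _ q
      rw [Submodule.mkQ_apply, Submodule.Quotient.mk_eq_zero]
      trivial
    have : Subsingleton (A ⧸ (⊤ : Ideal A)) := ⟨fun a b => by rw [hall a, hall b]⟩
    exact semisimple_of_subsingleton
  | @insert m s hms ih =>
    intro hs
    have hmax : m.IsMaximal := hs m (Finset.mem_insert_self m s)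
    have ihs : IsSemisimpleModule A (A ⧸ (s.inf id : Ideal A)) :=
      ih (fun k hk => hs k (Finset.mem_insert_of_mem hk))
    haveI : IsSimpleModule A (A ⧸ m) :=
      isSimpleModule_iff_isCoatom.mpr (Ideal.isMaximal_def.mp hmax)
    haveI : IsSemisimpleModule A (A ⧸ m) := inferInstance
    haveI hprod : IsSemisimpleModule A ((A ⧸ m) × (A ⧸ (s.inf id : Ideal A))) :=
      semisimple_prod
    have hinf : ((insert m s).inf id : Ideal A) = m ⊓ s.inf id := by
      rw [Finset.inf_insert]; rfl
    rw [hinf]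
    -- embed into the product
    set f : A →ₗ[A] (A ⧸ m) × (A ⧸ (s.inf id : Ideal A)) :=
      LinearMap.prod (m : Submodule A A).mkQ ((s.inf id : Ideal A) : Submodule A A).mkQ with hf
    have hker : LinearMap.ker f = (m ⊓ s.inf id : Ideal A) := by
      rw [hf, LinearMap.ker_prod, Submodule.ker_mkQ, Submodule.ker_mkQ]
    have e : (A ⧸ (m ⊓ s.inf id : Ideal A)) ≃ₗ[A] (A ⧸ LinearMap.ker f) :=
      Submodule.quotEquivOfEq _ _ hker.symm
    have e2 : (A ⧸ LinearMap.ker f) ≃ₗ[A] LinearMap.range f := f.quotKerEquivRange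
    haveI : IsSemisimpleModule A (LinearMap.range f) := inferInstance
    exact IsSemisimpleModule.congr (e.trans e2)

/-- The quotient by the Jacobson radical of a left artinian ring is a semisimple module. -/
private lemma semisimple_quot_jrad (A : Type*) [Ring A] [IsArtinianRing A] [Nontrivial A] :
    IsSemisimpleModule A (A ⧸ (jrad A : Ideal A)) := by
  classical
  -- the set of finite infs of maximal left ideals has a minimal element
  have hS : ({I : Submodule A A | ∃ s : Finset (Ideal A),
      (∀ m ∈ s, m.IsMaximal) ∧ I = s.inf id} : Set (Submodule A A)).Nonempty := by
    obtain ⟨m, hm⟩ := Ideal.exists_maximal A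
    exact ⟨m, {m}, by simpa using hm, by simp⟩
  obtain ⟨I, ⟨s, hsmax, rfl⟩, hmin⟩ := IsArtinian.set_has_minimal _ hS
  have hle : ∀ m : Ideal A, m.IsMaximal → (s.inf id : Ideal A) ≤ m := by
    intro m hm
    by_contra hc
    refine hmin ((insert m s).inf id)
      ⟨insert m s, fun k hk => ?_, rfl⟩ ?_
    · rcases Finset.mem_insert.mp hk with h | h
      · exact h ▸ hm
      · exact hsmax k h
    · rw [Finset.inf_insert]
      show (id m ⊓ s.inf id : Ideal A) < s.inf id
      apply lt_of_le_of_ne inf_le_right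
      intro heq
      exact hc (by rw [← heq]; exact inf_le_left)
  have hJ : jrad A = (s.inf id : Ideal A) := by
    apply le_antisymm
    · apply Finset.le_inf
      intro m hm
      exact sInf_le ⟨bot_le, hsmax m hm⟩
    · apply le_sInf
      rintro m ⟨-, hm⟩
      exact hle m hm
  rw [hJ]
  exact semisimple_quot_finset_inf s hsmax

/-- An artinian module killed by the Jacobson radical is semisimple. -/
private lemma semisimple_of_jrad_kill (A : Type*) [Ring A] [IsArtinianRing A] [Nontrivial A]
    (M : Type*) [AddCommGroup M] [Module A M]
    (h : ∀ j ∈ jrad A, ∀ m : M, j • m = 0) : IsSemisimpleModule A M := by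
  haveI hss : IsSemisimpleModule A (A ⧸ (jrad A : Ideal A)) := semisimple_quot_jrad A
  refine isSemisimpleModule_of_isSemisimpleModule_submodule'
    (p := fun m : M => span A {m}) (fun m => ?_) ?_
  · -- span {m} is semisimple
    set f : A →ₗ[A] M := LinearMap.toSpanSingleton A M m with hf
    have hrange : span A {m} = LinearMap.range f := LinearMap.span_singleton_eq_range A M m
    have hker : (jrad A : Submodule A A) ≤ LinearMap.ker f := by
      intro j hj
      simp only [LinearMap.mem_ker, hf, LinearMap.toSpanSingleton_apply]
      exact h j hj m
    -- A ⧸ ker f is a quotient of A ⧸ jrad A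
    set g : (A ⧸ (jrad A : Ideal A)) →ₗ[A] (A ⧸ LinearMap.ker f) :=
      Submodule.mapQ _ _ LinearMap.id hker with hg
    have hgsurj : Function.Surjective g := by
      intro y
      obtain ⟨x, rfl⟩ := Submodule.mkQ_surjective _ y
      exact ⟨Submodule.Quotient.mk x, by simp [hg, Submodule.mapQ_apply]⟩
    haveI h1 : IsSemisimpleModule A (A ⧸ LinearMap.ker f) := semisimple_of_surjective g hgsurj
    have e : (span A {m} : Submodule A M) ≃ₗ[A] LinearMap.range f :=
      LinearEquiv.ofEq _ _ hrange
    have e2 : LinearMap.range f ≃ₗ[A] (A ⧸ LinearMap.ker f) := f.quotKerEquivRange.symm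
    exact IsSemisimpleModule.congr (e.trans e2)
  · apply Submodule.eq_top_iff'.mpr
    intro x
    exact Submodule.mem_iSup_of_mem x (Submodule.mem_span_singleton_self x)

/-- Hopkins–Levitzki: a left artinian ring is left noetherian. -/
private theorem isNoetherian_of_isArtinianRing (A : Type*) [Ring A] [IsArtinianRing A] :
    IsNoetherian A A := by
  rcases subsingleton_or_nontrivial A with hsub | hnt
  · exact inferInstance
  obtain ⟨N, hN⟩ := jpow_eq_bot A
  -- step lemma
  have hstep : ∀ k : ℕ, IsNoetherian A ↥(jpow A (k+1) : Submodule A A) →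
      IsNoetherian A ↥(jpow A k : Submodule A A) := by
    intro k hk
    set P := ↥(jpow A k : Submodule A A)
    set S : Submodule A P :=
      Submodule.comap (jpow A k : Submodule A A).subtype (jpow A (k+1) : Submodule A A) with hS
    refine (isNoetherian_iff_submodule_quotient S).mpr ⟨?_, ?_⟩
    · -- S is isomorphic to jpow A (k+1)
      haveI := hk
      have e : S ≃ₗ[A] ↥(jpow A (k+1) : Submodule A A) :=
        Submodule.comap_equiv_self_of_inj_of_le (jpow A k : Submodule A A).injective_subtype
          (by rw [Submodule.range_subtype]; exact jpow_succ_le k)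
      exact isNoetherian_of_linearEquiv e.symm
    · -- quotient is semisimple and artinian, hence noetherian
      haveI hart : IsArtinian A (P ⧸ S) := inferInstance
      haveI hss : IsSemisimpleModule A (P ⧸ S) := by
        apply semisimple_of_jrad_kill A
        intro j hj q
        obtain ⟨y, rfl⟩ := Submodule.mkQ_surjective S q
        have : j • y ∈ S := by
          rw [hS, Submodule.mem_comap]
          show (j • (y : A)) ∈ (jpow A (k+1) : Submodule A A)
          exact Submodule.smul_mem_smul hj y.2
        calc j • S.mkQ y = S.mkQ (j • y) := (LinearMap.map_smul S.mkQ j y).symm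
        _ = 0 := by rwa [Submodule.mkQ_apply, Submodule.Quotient.mk_eq_zero]
      exact (IsSemisimpleModule.finite_tfae.out 2 1).mp hart
  have key : ∀ i : ℕ, IsNoetherian A ↥(jpow A (N - i) : Submodule A A) := by
    intro i
    induction i with
    | zero =>
      have : jpow A (N - 0) = (⊥ : Ideal A) := by simpa using hN
      rw [this]
      infer_instance
    | succ i ih =>
      rcases Nat.lt_or_ge i N with h | h
      · have he : N - i = (N - (i+1)) + 1 := by omega
        rw [he] at ih
        exact hstep _ ih
      · have he : N - (i+1) = N - i := by omega
        rw [he]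
        exact ih
  have := key N
  have hz : N - N = 0 := by omega
  rw [hz] at this
  have htop : jpow A 0 = (⊤ : Ideal A) := rfl
  rw [htop] at this
  exact isNoetherian_of_linearEquiv (Submodule.topEquiv (R := A) (M := A))

end HL

/-- A surjective homomorphism of artinian rings induces a surjection on groups
of units. -/
theorem stmt_6 {A B : Type*} [Ring A] [Ring B] [IsArtinianRing A] [IsArtinianRing B]
    (φ : A →+* B) (hφ : Function.Surjective φ) :
    Function.Surjective (Units.map (φ : A →* B)) := by
  haveI : IsNoetherian A A := isNoetherian_of_isArtinianRing A
  intro β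
  obtain ⟨a, ha⟩ := hφ (β : B)
  set f : A →ₗ[A] A := LinearMap.toSpanSingleton A A a with hfdef
  have hfa : ∀ x : A, f x = x * a := by
    intro x
    rw [hfdef, LinearMap.toSpanSingleton_apply, smul_eq_mul]
  have hfpow : ∀ (k : ℕ) (x : A), (f ^ k) x = x * a ^ k := by
    intro k
    induction k with
    | zero => intro x; simp
    | succ k ih =>
      intro x
      rw [pow_succ', Module.End.mul_apply, ih, hfa, pow_succ, ← mul_assoc]
  obtain ⟨n, ⟨hdis, hcodis⟩, hn1⟩ :=
    (((Module.End.eventually_disjoint_ker_pow_range_pow f).and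
      f.eventually_codisjoint_ker_pow_range_pow).and (Filter.eventually_ge_atTop 1)).exists
  set K : Submodule A A := LinearMap.ker (f ^ n) with hKdef
  set I : Submodule A A := LinearMap.range (f ^ n) with hIdef
  have memK : ∀ x : A, x ∈ K ↔ x * a ^ n = 0 := by
    intro x
    rw [hKdef, LinearMap.mem_ker, hfpow]
  have memI : ∀ x : A, x ∈ I ↔ ∃ z, z * a ^ n = x := by
    intro x
    constructor
    · rintro ⟨z, rfl⟩
      exact ⟨z, (hfpow n z).symm⟩
    · rintro ⟨z, hz⟩
      exact ⟨z, by rw [hfpow]; exact hz⟩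
  have hmulK : ∀ (x : A), ∀ k ∈ K, x * k ∈ K := by
    intro x k hk
    rw [memK] at hk ⊢
    rw [mul_assoc, hk, mul_zero]
  have hmulI : ∀ (x : A), ∀ y ∈ I, x * y ∈ I := by
    intro x y hy
    obtain ⟨z, rfl⟩ := (memI y).mp hy
    exact (memI _).mpr ⟨x * z, by rw [mul_assoc]⟩
  -- decompose 1
  have h1mem : (1 : A) ∈ K ⊔ I := by
    rw [codisjoint_iff.mp hcodis]
    trivial
  obtain ⟨e, heK, i, hiI, hei⟩ := Submodule.mem_sup.mp h1mem
  have hK : ∀ x ∈ K, x * e = x := by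
    intro x hx
    have hxi_I : x * i ∈ I := hmulI x i hiI
    have hxe_K : x * e ∈ K := hmulK x e heK
    have hx1 : x * e + x * i = x := by rw [← mul_add, hei, mul_one]
    have hxi_K : x * i ∈ K := by
      rw [eq_sub_of_add_eq' hx1]
      exact sub_mem hx hxe_K
    have h0 : x * i = 0 := Submodule.disjoint_def.mp hdis _ hxi_K hxi_I
    rw [h0, add_zero] at hx1
    exact hx1
  have hI0 : ∀ x ∈ I, x * e = 0 := by
    intro x hx
    have hxe_K : x * e ∈ K := hmulK x e heK
    have hxi_I : x * i ∈ I := hmulI x i hiI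
    have hx1 : x * e + x * i = x := by rw [← mul_add, hei, mul_one]
    have hxe_I : x * e ∈ I := by
      rw [eq_sub_of_add_eq hx1]
      exact sub_mem hx hxi_I
    exact Submodule.disjoint_def.mp hdis _ hxe_K hxe_I
  have hea : e * a ^ n = 0 := (memK e).mp heK
  -- φ e = 0
  have hφe : φ e = 0 := by
    have h0 : φ e * (β : B) ^ n = 0 := by
      calc φ e * (β : B) ^ n = φ (e * a ^ n) := by rw [map_mul, map_pow, ha]
      _ = 0 := by rw [hea, map_zero]
    refine (β.isUnit.pow n).mul_right_cancel ?_
    rw [h0, zero_mul]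
  set u : A := a + e with hudef
  have hφu : φ u = (β : B) := by rw [hudef, map_add, ha, hφe, add_zero]
  -- commuting of a with its powers, in the form we need
  have hcomm : ∀ m : ℕ, a * a ^ m = a ^ m * a := by
    intro m
    rw [← pow_succ, ← pow_succ']
  -- surjectivity on K
  have Ksurj : ∀ m : ℕ, ∀ x, x ∈ K → x * a ^ m = 0 → ∃ v ∈ K, v * a + v = x := by
    intro m
    induction m with
    | zero =>
      intro x hx hx0
      rw [pow_zero, mul_one] at hx0
      exact ⟨0, zero_mem _, by rw [hx0]; simp⟩
    | succ m ih =>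
      intro x hx hx0
      have hxa_K : x * a ∈ K := by
        rw [memK]
        calc x * a * a ^ n = x * (a * a ^ n) := by rw [mul_assoc]
        _ = x * (a ^ n * a) := by rw [hcomm]
        _ = x * a ^ n * a := by rw [mul_assoc]
        _ = 0 := by rw [(memK x).mp hx, zero_mul]
      have hxa0 : (x * a) * a ^ m = 0 := by
        rw [mul_assoc, ← pow_succ']
        exact hx0
      obtain ⟨w, hwK, hw⟩ := ih (x * a) hxa_K hxa0
      refine ⟨x - w, sub_mem hx hwK, ?_⟩
      have hexp : (x - w) * a + (x - w) = (x * a + x) - (w * a + w) := by noncomm_ring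
      rw [hexp, hw]
      noncomm_ring
  -- surjectivity on I
  have Isurj : ∀ y ∈ I, ∃ v ∈ I, v * a = y := by
    intro y hy
    obtain ⟨z, hz⟩ := (memI y).mp hy
    have hzKI : z ∈ K ⊔ I := by rw [codisjoint_iff.mp hcodis]; trivial
    obtain ⟨k, hkK, w, hwI, hkw⟩ := Submodule.mem_sup.mp hzKI
    have hy' : w * a ^ n = y := by
      have : (k + w) * a ^ n = y := by rw [hkw, hz]
      rw [add_mul, (memK k).mp hkK, zero_add] at this
      exact this
    obtain ⟨z', hz'⟩ := (memI w).mp hwI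
    have hpow : a ^ (n - 1) * a ^ n * a = a ^ n * a ^ n := by
      rw [mul_assoc, ← pow_succ, ← pow_add, ← pow_add]
      congr 1
      omega
    refine ⟨z' * a ^ (n - 1) * a ^ n, (memI _).mpr ⟨z' * a ^ (n - 1), rfl⟩, ?_⟩
    calc z' * a ^ (n - 1) * a ^ n * a = z' * (a ^ (n - 1) * a ^ n * a) := by
          rw [mul_assoc, mul_assoc, mul_assoc]
    _ = z' * (a ^ n * a ^ n) := by rw [hpow]
    _ = (z' * a ^ n) * a ^ n := by rw [mul_assoc]
    _ = w * a ^ n := by rw [hz']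
    _ = y := hy'
  -- v * u = 1
  obtain ⟨v₁, hv₁K, hv₁⟩ := Ksurj n e heK hea
  obtain ⟨v₂, hv₂I, hv₂⟩ := Isurj i hiI
  have hvu : (v₁ + v₂) * u = 1 := by
    rw [hudef, add_mul, mul_add, mul_add]
    rw [hK v₁ hv₁K, hI0 v₂ hv₂I, add_zero]
    calc v₁ * a + v₁ + (v₂ * a) = e + i := by rw [hv₁, hv₂]
    _ = 1 := hei
  set v : A := v₁ + v₂
  -- from left inverse to two-sided inverse, using artinianness
  have hginj : Function.Injective (LinearMap.toSpanSingleton A A v) := by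
    intro x y hxy
    simp only [LinearMap.toSpanSingleton_apply, smul_eq_mul] at hxy
    calc x = x * (v * u) := by rw [hvu, mul_one]
    _ = (x * v) * u := by rw [mul_assoc]
    _ = (y * v) * u := by rw [hxy]
    _ = y * (v * u) := by rw [mul_assoc]
    _ = y := by rw [hvu, mul_one]
  obtain ⟨w, hw⟩ :=
    IsArtinian.surjective_of_injective_endomorphism (LinearMap.toSpanSingleton A A v) hginj 1
  have hwv : w * v = 1 := by
    simpa only [LinearMap.toSpanSingleton_apply, smul_eq_mul] using hw
  have huv : u * v = 1 := by
    have huw : u = w := by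
      calc u = 1 * u := (one_mul u).symm
      _ = (w * v) * u := by rw [hwv]
      _ = w * (v * u) := by rw [mul_assoc]
      _ = w := by rw [hvu, mul_one]
    rw [huw]
    exact hwv
  refine ⟨⟨u, v, huv, hvu⟩, ?_⟩
  apply Units.ext
  show φ u = (β : B)
  exact hφu
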